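/- Let m ≥ 1 and n ≥ 0 be integers, and suppose there exists an additive 1-perfect code in ℤ4^{2m} × ℤ2^{2n} with respect to the Doob D(m,n)-metric. Then there exist integers γ ≥ 0 and δ > 0 such that n = (4^{γ+δ} − 1)/3 and m = (4^{γ+2δ} − 4^{γ+δ})/6. -/

import Mathlib

open SimpleGraph

/-- The box (Cartesian) product of an indexed family of simple graphs. -/
def boxPi {ι : Type*} {V : ι → Type*} (G : ∀ i, SimpleGraph (V i)) :
    SimpleGraph (∀ i, V i) where
  Adj x y := ∃ i, (G i).Adj (x i) (y i) ∧ ∀ j, j ≠ i → x j = y j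
  symm := by
    constructor
    rintro x y ⟨i, h, he⟩
    exact ⟨i, (G i).adj_symm h, fun j hj => (he j hj).symm⟩
  loopless := by
    constructor
    rintro x ⟨i, h, -⟩
    exact (G i).loopless.irrefl _ h

/-- The Shrikhande graph on `(ZMod 4) × (ZMod 4)`. -/
def Shri : SimpleGraph (ZMod 4 × ZMod 4) where
  Adj a b := a - b ∈
    ({(0, 1), (1, 0), (1, 1), (0, 3), (3, 0), (3, 3)} : Finset (ZMod 4 × ZMod 4))
  symm := by
    constructor
    have h : ∀ a b : ZMod 4 × ZMod 4,
        a - b ∈ ({(0, 1), (1, 0), (1, 1), (0, 3), (3, 0), (3, 3)} :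
          Finset (ZMod 4 × ZMod 4)) →
        b - a ∈ ({(0, 1), (1, 0), (1, 1), (0, 3), (3, 0), (3, 3)} :
          Finset (ZMod 4 × ZMod 4)) := by decide
    exact fun a b hab => h a b hab
  loopless := by
    constructor
    intro a h
    rw [sub_self] at h
    revert h
    decide

/-- `C` is a 1-perfect code in `G`: every vertex is at graph distance at most 1
(i.e., equal or adjacent) from exactly one element of `C`. -/
def IsPerfectCode {V : Type*} (G : SimpleGraph V) (C : Set V) : Prop :=
  ∀ v : V, ∃! c : V, c ∈ C ∧ (v = c ∨ G.Adj v c)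

/-- The vertex set `ℤ₄^{2m} × ℤ₂^{2n}`, the consecutive pairs of coordinates
being grouped together. -/
abbrev DoobVtx2 (m n : ℕ) : Type :=
  (Fin m → ZMod 4 × ZMod 4) × (Fin n → ZMod 2 × ZMod 2)

/-- The Doob graph `D(m, n)` on `ℤ₄^{2m} × ℤ₂^{2n}`: a Shrikhande graph on each
consecutive pair of the first `2m` `ZMod 4`-coordinates and a `K₄` on each
consecutive pair of `ZMod 2`-coordinates; the whole graph is the box product of
these `m + n` factors. -/
def DoobGraphZ2 (m n : ℕ) : SimpleGraph (DoobVtx2 m n) :=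
  (boxPi fun _ : Fin m => Shri) □
    (boxPi fun _ : Fin n => (⊤ : SimpleGraph (ZMod 2 × ZMod 2)))

namespace DoobAux

/-- The difference set of the Shrikhande graph. -/
def D6 : Finset (ZMod 4 × ZMod 4) := {(0, 1), (1, 0), (1, 1), (0, 3), (3, 0), (3, 3)}

lemma D6_ne_zero : ∀ d ∈ D6, d ≠ (0 : ZMod 4 × ZMod 4) := by decide

lemma D6_neg : ∀ d ∈ D6, -d ∈ D6 := by decide

lemma D6_add_self : ∀ d ∈ D6, d + d ≠ (0 : ZMod 4 × ZMod 4) := by decide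

lemma shri_adj (a b : ZMod 4 × ZMod 4) : Shri.Adj a b ↔ a - b ∈ D6 := Iff.rfl

lemma boxPi_adj {ι : Type*} {V : ι → Type*} (G : ∀ i, SimpleGraph (V i))
    (x y : ∀ i, V i) :
    (boxPi G).Adj x y ↔ ∃ i, (G i).Adj (x i) (y i) ∧ ∀ j, j ≠ i → x j = y j := Iff.rfl

variable {m n : ℕ}

lemma doob_adj_sub (x y : DoobVtx2 m n) :
    (DoobGraphZ2 m n).Adj x y ↔ (DoobGraphZ2 m n).Adj (x - y) 0 := by
  simp only [DoobGraphZ2, SimpleGraph.boxProd_adj, boxPi_adj, shri_adj, SimpleGraph.top_adj,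
    Prod.fst_sub, Prod.snd_sub, Pi.sub_apply, sub_zero, Prod.fst_zero, Prod.snd_zero,
    Pi.zero_apply, funext_iff, sub_eq_zero, ne_eq]

lemma cond_iff (v c : DoobVtx2 m n) :
    (v = c ∨ (DoobGraphZ2 m n).Adj v c) ↔
      (v - c = 0 ∨ (DoobGraphZ2 m n).Adj (v - c) 0) := by
  rw [← doob_adj_sub, sub_eq_zero]

lemma eq_single_iff {ι : Type*} [DecidableEq ι] {M : ι → Type*} [∀ i, Zero (M i)]
    (f : ∀ i, M i) (i : ι) (d : M i) :
    f = Pi.single i d ↔ f i = d ∧ ∀ j, j ≠ i → f j = 0 := by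
  constructor
  · rintro rfl
    exact ⟨Pi.single_eq_same i d, fun j hj => Pi.single_eq_of_ne hj d⟩
  · rintro ⟨h1, h2⟩
    funext j
    by_cases hj : j = i
    · subst hj; simpa [Pi.single_eq_same] using h1
    · simp [Pi.single_eq_of_ne hj, h2 j hj]

/-- Parameter type for the radius-1 ball. -/
abbrev PT (m n : ℕ) : Type :=
  Unit ⊕ (Fin m × {d : ZMod 4 × ZMod 4 // d ∈ D6}) ⊕ (Fin n × {d : ZMod 2 × ZMod 2 // d ≠ 0})

/-- Explicit parametrization of the radius-1 ball around `0` in the Doob graph. -/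
def F (m n : ℕ) : PT m n → DoobVtx2 m n
  | .inl _ => 0
  | .inr (.inl (i, d)) => (Pi.single i d.1, 0)
  | .inr (.inr (j, d)) => (0, Pi.single j d.1)

lemma F_range (x : DoobVtx2 m n) :
    (x = 0 ∨ (DoobGraphZ2 m n).Adj x 0) ↔ ∃ p, F m n p = x := by
  constructor
  · rintro (rfl | hadj)
    · exact ⟨.inl (), rfl⟩
    · rcases hadj with ⟨⟨i, hd, hrest⟩, h2⟩ | ⟨⟨j, hd, hrest⟩, h1⟩
      · refine ⟨.inr (.inl (i, ⟨x.1 i, by have hd' : x.1 i - 0 ∈ D6 := hd; simpa using hd'⟩)), ?_⟩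
        have hx1 : x.1 = Pi.single i (x.1 i) :=
          (eq_single_iff _ _ _).2 ⟨rfl, fun j hj => by simpa using hrest j hj⟩
        exact Prod.ext (by simp [F, ← hx1]) (by simp [F, h2])
      · refine ⟨.inr (.inr (j, ⟨x.2 j, by have hd' : x.2 j ≠ (0 : ZMod 2 × ZMod 2) := hd; simpa using hd'⟩)), ?_⟩
        have hx2 : x.2 = Pi.single j (x.2 j) :=
          (eq_single_iff _ _ _).2 ⟨rfl, fun k hk => by simpa using hrest k hk⟩
        exact Prod.ext (by simp [F, h1]) (by simp [F, ← hx2])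
  · rintro ⟨p, rfl⟩
    match p with
    | .inl _ => exact Or.inl rfl
    | .inr (.inl (i, d)) =>
      refine Or.inr (Or.inl ⟨⟨i, ?_, fun j hj => ?_⟩, rfl⟩)
      · simp only [F, Prod.fst_zero, Pi.zero_apply, shri_adj]
        simp [Pi.single_eq_same, d.2]
      · simp only [F, Prod.fst_zero, Pi.zero_apply]
        simp [Pi.single_eq_of_ne hj]
    | .inr (.inr (j, d)) =>
      refine Or.inr (Or.inr ⟨⟨j, ?_, fun k hk => ?_⟩, rfl⟩)
      · simp only [F, Prod.snd_zero, Pi.zero_apply, SimpleGraph.top_adj]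
        simpa [Pi.single_eq_same] using d.2
      · simp only [F, Prod.snd_zero, Pi.zero_apply]
        simp [Pi.single_eq_of_ne hk]

lemma F_injective : Function.Injective (F m n) := by
  rintro p q h
  match p, q with
  | .inl _, .inl _ => rfl
  | .inl _, .inr (.inl (i, d)) =>
    exfalso
    have := congrArg (fun z : DoobVtx2 m n => z.1 i) h
    simp [F, Pi.single_eq_same] at this
    exact D6_ne_zero d.1 d.2 this.symm
  | .inl _, .inr (.inr (j, d)) =>
    exfalso
    have := congrArg (fun z : DoobVtx2 m n => z.2 j) h
    simp [F, Pi.single_eq_same] at this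
    exact d.2 this.symm
  | .inr (.inl (i, d)), .inl _ =>
    exfalso
    have := congrArg (fun z : DoobVtx2 m n => z.1 i) h
    simp [F, Pi.single_eq_same] at this
    exact D6_ne_zero d.1 d.2 this
  | .inr (.inr (j, d)), .inl _ =>
    exfalso
    have := congrArg (fun z : DoobVtx2 m n => z.2 j) h
    simp [F, Pi.single_eq_same] at this
    exact d.2 this
  | .inr (.inl (i, d)), .inr (.inr (j, e)) =>
    exfalso
    have := congrArg (fun z : DoobVtx2 m n => z.1 i) h
    simp [F, Pi.single_eq_same] at this
    exact D6_ne_zero d.1 d.2 this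
  | .inr (.inr (j, d)), .inr (.inl (i, e)) =>
    exfalso
    have := congrArg (fun z : DoobVtx2 m n => z.2 j) h
    simp [F, Pi.single_eq_same] at this
    exact d.2 this
  | .inr (.inl (i, d)), .inr (.inl (i', d')) =>
    have h1 := congrArg Prod.fst h
    by_cases hii : i = i'
    · subst hii
      have := congrArg (fun f : Fin m → ZMod 4 × ZMod 4 => f i) h1
      simp [F, Pi.single_eq_same] at this
      simp [this]
    · exfalso
      have := congrArg (fun f : Fin m → ZMod 4 × ZMod 4 => f i) h1
      simp [F, Pi.single_eq_same, Pi.single_eq_of_ne hii] at this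
      exact D6_ne_zero d.1 d.2 this
  | .inr (.inr (j, d)), .inr (.inr (j', d')) =>
    have h1 := congrArg Prod.snd h
    by_cases hjj : j = j'
    · subst hjj
      have := congrArg (fun f : Fin n → ZMod 2 × ZMod 2 => f j) h1
      simp [F, Pi.single_eq_same] at this
      simp [Subtype.ext this]
    · exfalso
      have := congrArg (fun f : Fin n → ZMod 2 × ZMod 2 => f j) h1
      simp [F, Pi.single_eq_same, Pi.single_eq_of_ne hjj] at this
      exact d.2 this

end DoobAux

namespace DoobAux

variable {m n : ℕ}

lemma card_PT (m n : ℕ) : Nat.card (PT m n) = 1 + 6 * m + 3 * n := by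
  have h6 : Nat.card {d : ZMod 4 × ZMod 4 // d ∈ D6} = 6 := by
    rw [Nat.card_eq_fintype_card]; decide
  have h3 : Nat.card {d : ZMod 2 × ZMod 2 // d ≠ 0} = 3 := by
    rw [Nat.card_eq_fintype_card]; decide
  rw [Nat.card_sum, Nat.card_sum, Nat.card_prod, Nat.card_prod, h6, h3,
    Nat.card_eq_fintype_card (α := Fin m), Nat.card_eq_fintype_card (α := Fin n),
    Fintype.card_fin, Fintype.card_fin, Nat.card_unique]
  ring

lemma card_PT2 (n : ℕ) :
    Nat.card (Unit ⊕ (Fin n × {d : ZMod 2 × ZMod 2 // d ≠ 0})) = 1 + 3 * n := by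
  have h3 : Nat.card {d : ZMod 2 × ZMod 2 // d ≠ 0} = 3 := by
    rw [Nat.card_eq_fintype_card]; decide
  rw [Nat.card_sum, Nat.card_prod, h3, Nat.card_eq_fintype_card (α := Fin n),
    Fintype.card_fin, Nat.card_unique]
  ring

lemma four_torsion (x : DoobVtx2 m n) : (x + x) + (x + x) = 0 := by
  have h4 : ∀ v : ZMod 4 × ZMod 4, (v + v) + (v + v) = 0 := by decide
  have h2 : ∀ v : ZMod 2 × ZMod 2, (v + v) + (v + v) = 0 := by decide
  exact Prod.ext (funext fun i => h4 (x.1 i)) (funext fun j => h2 (x.2 j))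

section WithCode

variable (C : AddSubgroup (DoobVtx2 m n))

/-- The parametrization of the quotient group by the ball. -/
noncomputable def Φ (p : PT m n) : DoobVtx2 m n ⧸ C :=
  QuotientAddGroup.mk' C (F m n p)

variable {C}

lemma Phi_injective (hC : IsPerfectCode (DoobGraphZ2 m n) (C : Set (DoobVtx2 m n))) :
    Function.Injective (Φ C) := by
  intro p q h
  have hmem : F m n p - F m n q ∈ C := by
    rw [Φ, Φ] at h
    exact (QuotientAddGroup.eq_iff_sub_mem).1 h
  obtain ⟨c, -, huniq⟩ := hC (F m n p)
  have h0 : (0 : DoobVtx2 m n) = c := by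
    refine huniq 0 ⟨C.zero_mem, ?_⟩
    rw [cond_iff, sub_zero, F_range]
    exact ⟨p, rfl⟩
  have h1 : F m n p - F m n q = c := by
    refine huniq _ ⟨hmem, ?_⟩
    rw [cond_iff, sub_sub_cancel, F_range]
    exact ⟨q, rfl⟩
  have : F m n p = F m n q := by
    have := h1.trans h0.symm
    rwa [sub_eq_zero] at this
  exact F_injective this

lemma Phi_surjective (hC : IsPerfectCode (DoobGraphZ2 m n) (C : Set (DoobVtx2 m n))) :
    Function.Surjective (Φ C) := by
  intro s
  obtain ⟨v, rfl⟩ := QuotientAddGroup.mk'_surjective C s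
  obtain ⟨c, ⟨hcC, hcb⟩, -⟩ := hC v
  rw [cond_iff, F_range] at hcb
  obtain ⟨p, hp⟩ := hcb
  refine ⟨p, ?_⟩
  have hc0 : QuotientAddGroup.mk' C c = 0 := (QuotientAddGroup.eq_zero_iff c).2 hcC
  rw [Φ, hp, map_sub, hc0, sub_zero]

variable (C)

/-- The doubling homomorphism on the quotient. -/
noncomputable def dbl : (DoobVtx2 m n ⧸ C) →+ (DoobVtx2 m n ⧸ C) :=
  AddMonoidHom.mk' (fun s => s + s) (fun a b => by abel_nf)

lemma range_le_ker : (dbl C).range ≤ (dbl C).ker := by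
  rintro t ⟨s, rfl⟩
  obtain ⟨x, rfl⟩ := QuotientAddGroup.mk'_surjective C s
  have h : dbl C (dbl C ((QuotientAddGroup.mk' C) x)) =
      (QuotientAddGroup.mk' C) ((x + x) + (x + x)) := by
    simp only [dbl, AddMonoidHom.mk'_apply, map_add]
  rw [AddMonoidHom.mem_ker, h, four_torsion, map_zero]

/-- Embedding of the `K₄`-part parameters. -/
def emb2 (m n : ℕ) : Unit ⊕ (Fin n × {d : ZMod 2 × ZMod 2 // d ≠ 0}) → PT m n
  | .inl _ => .inl ()
  | .inr x => .inr (.inr x)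

lemma emb2_injective : Function.Injective (emb2 m n) := by
  rintro (⟨⟩ | x) (⟨⟩ | y) h
  · rfl
  · simp [emb2] at h
  · simp [emb2] at h
  · simp only [emb2, Sum.inr.injEq] at h
    rw [h]

lemma z2_add_self (v : ZMod 2 × ZMod 2) : v + v = 0 := by revert v; decide

lemma F_emb2_add (p : Unit ⊕ (Fin n × {d : ZMod 2 × ZMod 2 // d ≠ 0})) :
    F m n (emb2 m n p) + F m n (emb2 m n p) = 0 := by
  cases p with
  | inl u => show (0 : DoobVtx2 m n) + 0 = 0; rw [add_zero]
  | inr x =>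
    obtain ⟨j, d⟩ := x
    refine Prod.ext (by show (0 : Fin m → ZMod 4 × ZMod 4) + 0 = 0; rw [add_zero]) ?_
    show (Pi.single j d.1 : Fin n → ZMod 2 × ZMod 2) + Pi.single j d.1 = 0
    rw [← Pi.single_add, z2_add_self, Pi.single_zero]

variable {C}

/-- Parametrization of the 2-torsion of the quotient. -/
noncomputable def Φ2 (p : Unit ⊕ (Fin n × {d : ZMod 2 × ZMod 2 // d ≠ 0})) :
    (dbl C).ker :=
  ⟨Φ C (emb2 m n p), by
    rw [AddMonoidHom.mem_ker]
    show Φ C (emb2 m n p) + Φ C (emb2 m n p) = 0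
    rw [Φ, ← map_add, F_emb2_add, map_zero]⟩

lemma Phi2_injective (hC : IsPerfectCode (DoobGraphZ2 m n) (C : Set (DoobVtx2 m n))) :
    Function.Injective (Φ2 (C := C)) := by
  intro p q h
  have := Phi_injective hC (Subtype.ext_iff.1 h)
  exact emb2_injective this

lemma Phi2_surjective (hC : IsPerfectCode (DoobGraphZ2 m n) (C : Set (DoobVtx2 m n))) :
    Function.Surjective (Φ2 (C := C)) := by
  rintro ⟨s, hs⟩
  obtain ⟨p, rfl⟩ := Phi_surjective hC s
  match p with
  | .inl u => exact ⟨.inl (), Subtype.ext rfl⟩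
  | .inr (.inr x) => exact ⟨.inr x, Subtype.ext rfl⟩
  | .inr (.inl (i, d)) =>
    exfalso
    set q : PT m n := .inr (.inl (i, ⟨-d.1, D6_neg _ d.2⟩)) with hq
    have hadd : F m n (Sum.inr (Sum.inl (i, d))) + F m n q = 0 := by
      refine Prod.ext ?_ (by show (0 : Fin n → ZMod 2 × ZMod 2) + 0 = 0; rw [add_zero])
      show (Pi.single i d.1 : Fin m → ZMod 4 × ZMod 4) + Pi.single i (-d.1) = 0
      rw [← Pi.single_add, add_neg_cancel, Pi.single_zero]
    have hs' : Φ C (Sum.inr (Sum.inl (i, d))) + Φ C (Sum.inr (Sum.inl (i, d))) = 0 := by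
      have := AddMonoidHom.mem_ker.1 hs
      simpa only [dbl, AddMonoidHom.mk'_apply] using this
    have hq' : Φ C (Sum.inr (Sum.inl (i, d))) + Φ C q = 0 := by
      rw [Φ, Φ, ← map_add, hadd, map_zero]
    have heq : Φ C q = Φ C (Sum.inr (Sum.inl (i, d))) := by
      have := hq'.trans hs'.symm
      exact add_left_cancel this
    have hpq := Phi_injective hC heq
    rw [hq] at hpq
    simp only [Sum.inr.injEq, Sum.inl.injEq, Prod.mk.injEq, Subtype.mk.injEq, Subtype.ext_iff] at hpq
    exact D6_add_self d.1 d.2 (neg_eq_iff_add_eq_zero.1 hpq.2)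

lemma card_quotient (hC : IsPerfectCode (DoobGraphZ2 m n) (C : Set (DoobVtx2 m n))) :
    Nat.card (DoobVtx2 m n ⧸ C) = 1 + 6 * m + 3 * n := by
  rw [← Nat.card_eq_of_bijective _ ⟨Phi_injective hC, Phi_surjective hC⟩, card_PT]

lemma card_ker (hC : IsPerfectCode (DoobGraphZ2 m n) (C : Set (DoobVtx2 m n))) :
    Nat.card ((dbl C).ker) = 1 + 3 * n := by
  rw [← Nat.card_eq_of_bijective _ ⟨Phi2_injective hC, Phi2_surjective hC⟩, card_PT2]

lemma card_vtx (m n : ℕ) : Nat.card (DoobVtx2 m n) = 2 ^ (4 * m + 2 * n) := by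
  rw [Nat.card_prod, Nat.card_pi, Nat.card_pi]
  have h4 : Nat.card (ZMod 4 × ZMod 4) = 16 := by rw [Nat.card_eq_fintype_card]; decide
  have h2 : Nat.card (ZMod 2 × ZMod 2) = 4 := by rw [Nat.card_eq_fintype_card]; decide
  simp only [h4, h2, Finset.prod_const, Finset.card_univ, Fintype.card_fin]
  rw [pow_add, pow_mul, pow_mul]
  norm_num

end WithCode

end DoobAux

namespace DoobAux

lemma two_pow_mod_three (j : ℕ) : 2 ^ j % 3 = if j % 2 = 0 then 1 else 2 := by
  induction j with
  | zero => rfl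
  | succ k ih =>
    rw [pow_succ]
    by_cases hk : k % 2 = 0
    · rw [if_pos hk] at ih
      rw [if_neg (by omega)]
      omega
    · rw [if_neg hk] at ih
      rw [if_pos (by omega)]
      omega

end DoobAux

theorem additive_perfect_code_parameters_no_z4_part (m n : ℕ) (hm : 1 ≤ m)
    (C : AddSubgroup (DoobVtx2 m n))
    (hC : IsPerfectCode (DoobGraphZ2 m n) (C : Set (DoobVtx2 m n))) :
    ∃ γ δ : ℕ, 0 < δ ∧
      3 * n + 1 = 4 ^ (γ + δ) ∧
      6 * m + 4 ^ (γ + δ) = 4 ^ (γ + 2 * δ) := by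
  classical
  have hS : Nat.card (DoobVtx2 m n ⧸ C) = 1 + 6 * m + 3 * n := DoobAux.card_quotient hC
  have hK : Nat.card ((DoobAux.dbl C).ker) = 1 + 3 * n := DoobAux.card_ker hC
  have hmul : Nat.card (DoobVtx2 m n ⧸ C) =
      Nat.card ((DoobAux.dbl C).range) * Nat.card ((DoobAux.dbl C).ker) := by
    rw [AddSubgroup.card_eq_card_quotient_mul_card_addSubgroup ((DoobAux.dbl C).ker)]
    congr 1
    exact Nat.card_congr (QuotientAddGroup.quotientKerEquivRange (DoobAux.dbl C)).toEquiv
  have hdvd1 : Nat.card ((DoobAux.dbl C).range) ∣ Nat.card ((DoobAux.dbl C).ker) :=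
    AddSubgroup.card_dvd_of_le (DoobAux.range_le_ker C)
  have hdvd2 : Nat.card (DoobVtx2 m n ⧸ C) ∣ 2 ^ (4 * m + 2 * n) := by
    rw [← DoobAux.card_vtx m n,
      AddSubgroup.card_eq_card_quotient_mul_card_addSubgroup C]
    exact Dvd.intro _ rfl
  obtain ⟨e, -, hSe⟩ := (Nat.dvd_prime_pow Nat.prime_two).1 hdvd2
  have hKdvd : Nat.card ((DoobAux.dbl C).ker) ∣ 2 ^ e := by
    rw [← hSe, hmul]; exact dvd_mul_left _ _
  obtain ⟨j, -, hKj⟩ := (Nat.dvd_prime_pow Nat.prime_two).1 hKdvd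
  have hRdvd : Nat.card ((DoobAux.dbl C).range) ∣ 2 ^ e := by
    rw [← hSe, hmul]; exact dvd_mul_right _ _
  obtain ⟨r, -, hRr⟩ := (Nat.dvd_prime_pow Nat.prime_two).1 hRdvd
  -- exponent identities
  have herj : e = r + j := by
    apply Nat.pow_right_injective (le_refl 2)
    show (2 : ℕ) ^ e = 2 ^ (r + j)
    rw [← hSe, hmul, hRr, hKj, pow_add]
  have hrj : r ≤ j := by
    refine (Nat.pow_le_pow_iff_right (by norm_num : 1 < 2)).1 ?_
    exact Nat.le_of_dvd (Nat.pow_pos (by norm_num)) (hRr ▸ hKj ▸ hdvd1)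
  have hje : j < e := by
    refine (Nat.pow_lt_pow_iff_right (by norm_num : 1 < 2)).1 ?_
    omega
  have hj2 : j % 2 = 0 := by
    by_contra h
    have h1 := DoobAux.two_pow_mod_three j
    rw [if_neg h] at h1
    omega
  have he2 : e % 2 = 0 := by
    by_contra h
    have h1 := DoobAux.two_pow_mod_three e
    rw [if_neg h] at h1
    omega
  set a := j / 2 with ha
  set b := e / 2 with hb
  refine ⟨2 * a - b, b - a, by omega, ?_, ?_⟩
  · have hgd : (2 * a - b) + (b - a) = a := by omega
    have h4a : (4 : ℕ) ^ a = 2 ^ j := by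
      rw [show j = 2 * a by omega, pow_mul]; norm_num
    rw [hgd]
    omega
  · have hgd : (2 * a - b) + (b - a) = a := by omega
    have hgd2 : (2 * a - b) + 2 * (b - a) = b := by omega
    have h4a : (4 : ℕ) ^ a = 2 ^ j := by
      rw [show j = 2 * a by omega, pow_mul]; norm_num
    have h4b : (4 : ℕ) ^ b = 2 ^ e := by
      rw [show e = 2 * b by omega, pow_mul]; norm_num
    rw [hgd, hgd2]
    omega
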